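/- If φ(x) = x^p and ψ(x) = x^r with r > p + 1 ≥ 2, then ζ(x) = sup_{y ≥ 0} (φ(xy) − ψ(y)/y) is equivalent to x ↦ x^{p(r−1)/(r−p−1)}. -/
import Mathlib

open Filter Topology MeasureTheory
open scoped ENNReal
noncomputable section

/-- A Young function: strictly increasing, convex on `[0,∞)`, vanishing at `0`. -/
def IsYoung (f : ℝ → ℝ) : Prop :=
  StrictMonoOn f (Set.Ici 0) ∧ ConvexOn ℝ (Set.Ici 0) f ∧ f 0 = 0

/-- Legendre transform of a real function (sup over `y ≥ 0`), `ℝ≥0∞`-valued. -/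
def Leg (f : ℝ → ℝ) (x : ℝ) : ℝ≥0∞ :=
  ⨆ y : {y : ℝ // 0 ≤ y}, ENNReal.ofReal (x * y - f y)

/-- Legendre transform of an `ℝ≥0∞`-valued function. -/
def LegE (f : ℝ → ℝ≥0∞) (x : ℝ) : ℝ≥0∞ :=
  ⨆ y : {y : ℝ // 0 ≤ y}, (ENNReal.ofReal (x * y) - f y)

/-- Monotone extension of a real function on `[0,∞)` to `ℝ≥0∞` arguments. -/
def extE (f : ℝ → ℝ) (t : ℝ≥0∞) : ℝ≥0∞ :=
  ⨆ s : {s : ℝ // 0 ≤ s ∧ ENNReal.ofReal s ≤ t}, ENNReal.ofReal (f s)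

/-- Monotone extension of an `ℝ≥0∞`-valued function to `ℝ≥0∞` arguments. -/
def extLT (f : ℝ → ℝ≥0∞) (t : ℝ≥0∞) : ℝ≥0∞ :=
  ⨆ s : {s : ℝ // 0 ≤ s ∧ ENNReal.ofReal s ≤ t}, f s

/-- Generalized (right-continuous) inverse of an `ℝ≥0∞`-valued function. -/
def invE (g : ℝ → ℝ≥0∞) (t : ℝ≥0∞) : ℝ≥0∞ :=
  ⨅ s : {s : ℝ // 0 ≤ s ∧ t ≤ g s}, ENNReal.ofReal s

/-- `ρ(x) = sup_{y ≥ 0} (φ(xy) - ψ(y))/y`. -/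
def rhoSup (φ ψ : ℝ → ℝ) (x : ℝ) : ℝ≥0∞ :=
  ⨆ y : {y : ℝ // 0 ≤ y}, ENNReal.ofReal ((φ (x * y) - ψ y) / y)

/-- `ζ(x) = sup_{y ≥ 0} (φ(xy) - ψ(y)/y)`. -/
def zetaSup (φ ψ : ℝ → ℝ) (x : ℝ) : ℝ≥0∞ :=
  ⨆ y : {y : ℝ // 0 ≤ y}, ENNReal.ofReal (φ (x * y) - ψ y / y)

/-- Domination order on real functions: `f(x) ≤ C₁ g(C₂ x)` for large `x`. -/
def DominR (f g : ℝ → ℝ) : Prop :=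
  ∃ C₁ C₂ x₀ : ℝ, 0 < C₁ ∧ 0 < C₂ ∧ 0 < x₀ ∧ ∀ x ≥ x₀, f x ≤ C₁ * g (C₂ * x)

/-- Equivalence of real functions: mutual domination. -/
def EquivR (f g : ℝ → ℝ) : Prop := DominR f g ∧ DominR g f

/-- Domination order on `ℝ≥0∞`-valued functions. -/
def DominE (f g : ℝ → ℝ≥0∞) : Prop :=
  ∃ C₁ C₂ x₀ : ℝ, 0 < C₁ ∧ 0 < C₂ ∧ 0 < x₀ ∧
    ∀ x ≥ x₀, f x ≤ ENNReal.ofReal C₁ * g (C₂ * x)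

/-- Equivalence of `ℝ≥0∞`-valued functions: mutual domination. -/
def EquivE (f g : ℝ → ℝ≥0∞) : Prop := DominE f g ∧ DominE g f

/-- If φ(x) = x^p and ψ(x) = x^r with r > p + 1 ≥ 2 then
ζ(x) ≃ x^(p(r−1)/(r−p−1)). -/
theorem stmt12 (p r : ℝ) (hp : 1 ≤ p) (hr : p + 1 < r) :
    EquivE (zetaSup (fun t => t ^ p) (fun t => t ^ r))
      (fun x => ENNReal.ofReal (x ^ (p * (r - 1) / (r - p - 1)))) := by
  have hd : (0:ℝ) < r - p - 1 := by linarith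
  have hp0 : (0:ℝ) < p := by linarith
  set α := p * (r - 1) / (r - p - 1) with hα
  set β := p / (r - p - 1) with hβ
  have hβ0 : 0 < β := div_pos hp0 hd
  have hsum : (1 + β) * p = α := by
    rw [hβ, hα]; field_simp; ring
  have hβr : β * (r - 1) = α := by rw [hβ, hα]; field_simp
  have hβp : β * (r - p - 1) = p := by rw [hβ]; field_simp
  constructor
  · -- zetaSup ≤ target
    refine ⟨1, 1, 1, one_pos, one_pos, one_pos, fun x hx => ?_⟩
    have hx0 : (0:ℝ) < x := lt_of_lt_of_le one_pos hx
    simp only [one_mul, ENNReal.ofReal_one]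
    refine iSup_le fun z => ENNReal.ofReal_le_ofReal ?_
    obtain ⟨y, hy⟩ := z
    simp only
    rcases eq_or_lt_of_le hy with h0 | hy0
    · rw [← h0]
      simp [Real.zero_rpow (ne_of_gt hp0), Real.zero_rpow (ne_of_gt (by linarith : (0:ℝ) < r))]
      positivity
    · have hyr : y ^ r / y = y ^ (r - 1) := by
        rw [Real.rpow_sub hy0, Real.rpow_one]
      rw [hyr]
      by_cases hyY : y ≤ x ^ β
      · have h1 : x * y ≤ x ^ (1 + β) := by
          rw [Real.rpow_add hx0, Real.rpow_one]
          exact mul_le_mul_of_nonneg_left hyY hx0.le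
        have h2 : (x * y) ^ p ≤ x ^ α := by
          calc (x * y) ^ p ≤ (x ^ (1 + β)) ^ p :=
                Real.rpow_le_rpow (by positivity) h1 hp0.le
            _ = x ^ ((1 + β) * p) := by rw [← Real.rpow_mul hx0.le]
            _ = x ^ α := by rw [hsum]
        have h3 : (0:ℝ) ≤ y ^ (r - 1) := Real.rpow_nonneg hy0.le _
        linarith
      · push_neg at hyY
        have h1 : (x * y) ^ p ≤ y ^ (r - 1) := by
          have e1 : y ^ (r - 1) = y ^ p * y ^ (r - p - 1) := by
            rw [← Real.rpow_add hy0]; ring_nf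
          have e2 : x ^ p = (x ^ β) ^ (r - p - 1) := by
            rw [← Real.rpow_mul hx0.le, hβp]
          have h4 : (x ^ β) ^ (r - p - 1) ≤ y ^ (r - p - 1) :=
            Real.rpow_le_rpow (by positivity) hyY.le hd.le
          rw [Real.mul_rpow hx0.le hy0.le, e1, mul_comm]
          exact mul_le_mul_of_nonneg_left (e2 ▸ h4) (Real.rpow_nonneg hy0.le _)
        have h5 : (0:ℝ) ≤ x ^ α := Real.rpow_nonneg hx0.le _
        linarith
  · -- target ≤ C₁ * zetaSup
    set c : ℝ := (1/2) ^ p - (1/2 : ℝ) ^ (r - 1) with hc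
    have hc0 : 0 < c := by
      rw [hc]
      have : (1/2 : ℝ) ^ (r - 1) < (1/2 : ℝ) ^ p :=
        Real.rpow_lt_rpow_of_exponent_gt (by norm_num) (by norm_num) (by linarith)
      linarith
    refine ⟨c⁻¹, 1, 1, inv_pos.mpr hc0, one_pos, one_pos, fun x hx => ?_⟩
    have hx0 : (0:ℝ) < x := lt_of_lt_of_le one_pos hx
    simp only [one_mul]
    set y₀ : ℝ := (1/2) * x ^ β with hy₀
    have hy₀0 : 0 < y₀ := by positivity
    have key : (x * y₀) ^ p - y₀ ^ r / y₀ = c * x ^ α := by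
      have e1 : (x * y₀) ^ p = (1/2 : ℝ) ^ p * x ^ α := by
        have : x * y₀ = (1/2) * x ^ (1 + β) := by
          rw [Real.rpow_add hx0, Real.rpow_one, hy₀]; ring
        rw [this, Real.mul_rpow (by norm_num) (by positivity),
          ← Real.rpow_mul hx0.le, hsum]
      have e2 : y₀ ^ r / y₀ = (1/2 : ℝ) ^ (r - 1) * x ^ α := by
        rw [show y₀ ^ r / y₀ = y₀ ^ (r - 1) by
            rw [Real.rpow_sub hy₀0, Real.rpow_one],
          hy₀, Real.mul_rpow (by norm_num) (by positivity),
          ← Real.rpow_mul hx0.le, hβr]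
      rw [e1, e2, hc]; ring
    have hle : ENNReal.ofReal (c * x ^ α) ≤
        zetaSup (fun t => t ^ p) (fun t => t ^ r) x := by
      refine le_iSup_of_le ⟨y₀, hy₀0.le⟩ ?_
      simp only
      rw [key]
    calc ENNReal.ofReal (x ^ α)
        = ENNReal.ofReal c⁻¹ * ENNReal.ofReal (c * x ^ α) := by
          rw [← ENNReal.ofReal_mul (by positivity), ← mul_assoc,
            inv_mul_cancel₀ hc0.ne', one_mul]
      _ ≤ ENNReal.ofReal c⁻¹ *
          zetaSup (fun t => t ^ p) (fun t => t ^ r) x :=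
          mul_le_mul_right hle _
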